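/- Sample a forest uniformly from the set of plane forests with ranked roots having ECD s̃ (z̃ roots, m̃ vertices), and let X₁ be the number of children of the first root. Then P(X₁ = i) = (z̃ − 1 + i)·s̃_i / (z̃·(m̃−1)) for each i ≥ 0 with s̃_i ≥ 1. -/

import Mathlib

open scoped BigOperators Classical
open Filter MeasureTheory

namespace Paper

inductive PlaneTree : Type
  | node : List PlaneTree → PlaneTree

namespace PlaneTree

def deg : PlaneTree → ℕ
  | node ts => ts.length

mutual
  def pos : PlaneTree → List (List ℕ)
    | node ts => [] :: posF 0 ts
  def posF : ℕ → List PlaneTree → List (List ℕ)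
    | _, [] => []
    | i, t :: ts => (pos t).map (fun q => i :: q) ++ posF (i + 1) ts
end

mutual
  def dfsDeg : PlaneTree → List ℕ
    | node ts => ts.length :: dfsDegF ts
  def dfsDegF : List PlaneTree → List ℕ
    | [] => []
    | t :: ts => dfsDeg t ++ dfsDegF ts
end

def subtreeAt : PlaneTree → List ℕ → Option PlaneTree
  | t, [] => some t
  | node ts, i :: p =>
    match ts[i]? with
    | some t' => subtreeAt t' p
    | none => none

def numChild (t : PlaneTree) (p : List ℕ) : ℕ := ((subtreeAt t p).map deg).getD 0

def IsVertex (t : PlaneTree) (p : List ℕ) : Prop := (subtreeAt t p).isSome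

def IsLeaf (t : PlaneTree) (p : List ℕ) : Prop := (subtreeAt t p).isSome ∧ numChild t p = 0

/-- number of vertices of `t` having exactly `i` children (empirical children distribution) -/
def ecd (t : PlaneTree) (i : ℕ) : ℕ :=
  ((pos t).filter fun p => decide (numChild t p = i)).length

/-- ECD of a plane forest with ranked roots -/
def ecdF (f : List PlaneTree) (i : ℕ) : ℕ := (f.map fun t => ecd t i).sum

/-- number of children of the `j`-th root of a forest -/
def rootDeg (f : List PlaneTree) (j : ℕ) : ℕ := deg (f.getD j (node []))

/-- the set of plane forests with ranked roots with ECD `s` -/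
def forestSet (s : ℕ → ℕ) : Set (List PlaneTree) := {f | ∀ i, ecdF f i = s i}

/-- the set of plane trees with ECD `s` -/
def treeSet (s : ℕ → ℕ) : Set PlaneTree := {t | ∀ i, ecd t i = s i}

/-- strict depth-first (preorder) order on positions -/
def dfLT (p q : List ℕ) : Prop := List.Lex (· < ·) p q

def parent (p : List ℕ) : List ℕ := p.dropLast

/-- `q` is a strict ancestor of `p`, i.e. `q ∈ [ρ, p)` -/
def StrictAnc (q p : List ℕ) : Prop := q <+: p ∧ q ≠ p

/-- admissible (ordered) pair of leaves -/
def Admissible (t : PlaneTree) (u v : List ℕ) : Prop :=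
  IsLeaf t u ∧ IsLeaf t v ∧ 2 ≤ v.length ∧
    StrictAnc (parent (parent v)) (parent u) ∧ dfLT (parent u) (parent v)

def ASet (t : PlaneTree) : Set (List ℕ × List ℕ) := {uv | Admissible t uv.1 uv.2}

def fA (t : PlaneTree) (u : List ℕ) : Set (List ℕ) := {v | Admissible t u v}

def B2 (t : PlaneTree) (u : List ℕ) : Set (List ℕ) :=
  {v | IsVertex t v ∧ 2 ≤ v.length ∧ StrictAnc (parent (parent v)) u}

noncomputable def leafFinset (t : PlaneTree) : Finset (List ℕ) :=
  ((pos t).toFinset).filter fun p => IsLeaf t p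

def leafOf {k : ℕ} (w : Fin k → List ℕ × List ℕ) (y : Fin k × Bool) : List ℕ :=
  if y.2 then (w y.1).1 else (w y.1).2

/-- ordered `k`-tuples of admissible pairs using `2k` distinct leaves -/
def AkOrd (t : PlaneTree) (k : ℕ) : Set (Fin k → List ℕ × List ℕ) :=
  {w | (∀ a, Admissible t (w a).1 (w a).2) ∧ Function.Injective (leafOf w)}

/-- unordered collections of `k` admissible pairs using `2k` distinct leaves -/
def Ak (t : PlaneTree) (k : ℕ) : Set (Finset (List ℕ × List ℕ)) :=
  {x | x.card = k ∧ (∀ uv ∈ x, Admissible t uv.1 uv.2) ∧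
    Set.InjOn (fun y : (List ℕ × List ℕ) × Bool => if y.2 then y.1.1 else y.1.2)
      {y | y.1 ∈ x}}

/-- the set `T_s^(k)` of pairs of a plane tree with ECD `s` and a set of `k` admissible pairs -/
def Tsk (s : ℕ → ℕ) (k : ℕ) : Set (PlaneTree × Finset (List ℕ × List ℕ)) :=
  {tx | (∀ i, ecd tx.1 i = s i) ∧ tx.2 ∈ Ak tx.1 k}

end PlaneTree

/-- labeled plane trees -/
inductive LTree : Type
  | node : ℕ → List LTree → LTree

namespace LTree

mutual
  def shape : LTree → PlaneTree
    | node _ ts => .node (shapeF ts)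
  def shapeF : List LTree → List PlaneTree
    | [] => []
    | t :: ts => shape t :: shapeF ts
end

mutual
  def dfsLab : LTree → List ℕ
    | node a ts => a :: dfsLabF ts
  def dfsLabF : List LTree → List ℕ
    | [] => []
    | t :: ts => dfsLab t ++ dfsLabF ts
end

mutual
  def dfsDeg : LTree → List ℕ
    | node _ ts => ts.length :: dfsDegF ts
  def dfsDegF : List LTree → List ℕ
    | [] => []
    | t :: ts => dfsDeg t ++ dfsDegF ts
end

def subtreeAt : LTree → List ℕ → Option LTree
  | t, [] => some t
  | node _ ts, i :: p =>
    match ts[i]? with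
    | some t' => subtreeAt t' p
    | none => none

def labelAt (t : LTree) (p : List ℕ) : ℕ :=
  ((subtreeAt t p).map fun u => match u with | node a _ => a).getD 0

end LTree

/-- partial-sum steps of the permuted walk -/
def steps {m : ℕ} (c : Fin m → ℕ) (π : Equiv.Perm (Fin m)) : List ℤ :=
  List.ofFn fun i => (c (π i) : ℤ) - 1

/-- first index `j ∈ [1, length]` at which the partial sums attain their minimum -/
noncomputable def firstMinIdx (l : List ℤ) : ℕ :=
  (((Finset.Icc 1 l.length).filter fun j =>
      ∀ j' ∈ Finset.Icc 1 l.length, (l.take j).sum ≤ (l.take j').sum).min).untopD 0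

/-- the DFS vertex sequence obtained by rotating the uniformly permuted vertex
sequence at the first minimum of its Łukasiewicz-type walk (Vervaat transform) -/
noncomputable def rotSeq {m : ℕ} (c : Fin m → ℕ) (π : Equiv.Perm (Fin m)) : List (Fin m) :=
  (List.ofFn fun i => π i).rotate (firstMinIdx (steps c π))

/-- the degree of a vertex in a (simple) edge set -/
def degIn (E : Finset (Sym2 ℕ)) (v : ℕ) : ℕ := (E.filter fun e => v ∈ e).card

/-- degree of a vertex in a multigraph given by an edge multiset (loops count twice) -/
def mdeg (E : Multiset (Sym2 ℕ)) (v : ℕ) : ℕ :=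
  (E.map fun e => (if v ∈ e then 1 else 0) + (if e = s(v, v) then 1 else 0)).sum

/-- connectivity of a (multi)graph on vertex set `V` with edges `E` -/
def ConnOn (V : Finset ℕ) (E : Set (Sym2 ℕ)) : Prop :=
  ∀ a ∈ V, ∀ b ∈ V, Relation.ReflTransGen (fun a b => s(a, b) ∈ E) a b

/-- the set of simple connected labeled graphs on `{1, …, m}` with degree sequence `d` -/
def GconSet (m : ℕ) (d : ℕ → ℕ) : Set (Finset (Sym2 ℕ)) :=
  {E | (∀ e ∈ E, ¬ e.IsDiag) ∧ (∀ e ∈ E, ∀ v ∈ e, v ∈ Finset.Icc 1 m) ∧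
       (∀ v ∈ Finset.Icc 1 m, degIn E v = d v) ∧ ConnOn (Finset.Icc 1 m) (E : Set (Sym2 ℕ))}

/-- ECD of the children sequence `(d̃₂ − 1, …, d̃_{m̃} − 1, 0, …, 0)` (with `2k` zeros) -/
def ecdFromDeg (m k : ℕ) (d : ℕ → ℕ) (i : ℕ) : ℕ :=
  ((Finset.Icc 2 m).filter fun j => d j = i + 1).card + if i = 0 then 2 * k else 0

/-- `≪` order on admissible pairs -/
def pairLT (a b : List ℕ × List ℕ) : Prop :=
  PlaneTree.dfLT (PlaneTree.parent a.1) (PlaneTree.parent b.1) ∨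
    (PlaneTree.parent a.1 = PlaneTree.parent b.1 ∧
      PlaneTree.dfLT (PlaneTree.parent a.2) (PlaneTree.parent b.2))

/-- labeled elements of `T_s^(k)` as in the sampling algorithm: a labeled plane tree whose
labels are `{2, …, m̃ + 2k}`, in which the vertex labeled `j ≤ m̃` has `d̃_j − 1` children and
the vertices labeled `> m̃` are leaves, together with a `≪`-increasing tuple of `k` admissible
pairs of leaves with distinct leaves, the `j`-th pair carrying labels `(m̃+2j−1, m̃+2j)`. -/
def IsLabeledElement (m k : ℕ) (d : ℕ → ℕ) (t : LTree)
    (x : Fin k → List ℕ × List ℕ) : Prop :=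
  (LTree.dfsLab t).Perm (List.range' 2 (m - 1 + 2 * k)) ∧
  (∀ p ∈ PlaneTree.pos (LTree.shape t),
    PlaneTree.numChild (LTree.shape t) p =
      (if 2 ≤ LTree.labelAt t p ∧ LTree.labelAt t p ≤ m then d (LTree.labelAt t p) - 1 else 0)) ∧
  (∀ j, PlaneTree.Admissible (LTree.shape t) (x j).1 (x j).2) ∧
  Function.Injective (PlaneTree.leafOf x) ∧
  (∀ j j' : Fin k, j < j' → pairLT (x j) (x j')) ∧
  (∀ j : Fin k, LTree.labelAt t (x j).1 = m + 2 * (j : ℕ) + 1 ∧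
      LTree.labelAt t (x j).2 = m + 2 * (j : ℕ) + 2)

/-- the edge multiset of the graph `I(t, x)`: tree edges, with the leaves of the admissible
pairs deleted and an edge joining the two parents of each admissible pair added -/
noncomputable def Iedges (t : LTree) {k : ℕ} (x : Fin k → List ℕ × List ℕ) :
    Multiset (Sym2 ℕ) :=
  (↑(((PlaneTree.pos (LTree.shape t)).filter fun p =>
        decide (p ≠ ([] : List ℕ) ∧ ∀ j, p ≠ (x j).1 ∧ p ≠ (x j).2)).map
      fun p => s(LTree.labelAt t (PlaneTree.parent p), LTree.labelAt t p)) : Multiset (Sym2 ℕ))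
  + ↑(List.ofFn fun j =>
      s(LTree.labelAt t (PlaneTree.parent (x j).1), LTree.labelAt t (PlaneTree.parent (x j).2)))

/- Brownian excursion: Gaussian/Bessel kernels and finite-dimensional densities -/
noncomputable def gaussD (s x : ℝ) : ℝ := Real.exp (-(x ^ 2) / (2 * s)) / Real.sqrt (2 * Real.pi * s)

noncomputable def killedK (s x y : ℝ) : ℝ := gaussD s (y - x) - gaussD s (y + x)

noncomputable def bes3K (s x y : ℝ) : ℝ := (y / x) * killedK s x y

noncomputable def exStart (t x : ℝ) : ℝ :=
  Real.sqrt (2 / Real.pi) * x ^ 2 * t ^ (-(3 : ℝ) / 2) * Real.exp (-(x ^ 2) / (2 * t))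

noncomputable def exEnd (s x : ℝ) : ℝ := (2 / s) * gaussD s x

/-- finite-dimensional density of the standard Brownian excursion at times `t 0 < … < t n` -/
noncomputable def exFdd {n : ℕ} (t : Fin (n + 1) → ℝ) (x : Fin (n + 1) → ℝ) : ℝ :=
  if ∀ i, 0 < x i then
    Real.sqrt (Real.pi / 2) * exStart (t 0) (x 0) *
      (∏ i : Fin n, bes3K (t i.succ - t i.castSucc) (x i.castSucc) (x i.succ)) *
      exEnd (1 - t (Fin.last n)) (x (Fin.last n))
  else 0

/-- `e` is a standard Brownian excursion on `[0,1]`: continuous nonnegative paths vanishing at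
the endpoints, positive inside, with the excursion finite-dimensional densities. -/
def IsStdBrownianExcursion {Ω : Type*} [MeasureSpace Ω] (e : Ω → ℝ → ℝ) : Prop :=
  (∀ ω, Continuous (e ω)) ∧ (∀ ω, e ω 0 = 0) ∧ (∀ ω, e ω 1 = 0) ∧
  (∀ ω, ∀ x ∈ Set.Ioo (0 : ℝ) 1, 0 < e ω x) ∧
  (∀ t : ℝ, Measurable fun ω => e ω t) ∧
  ∀ (n : ℕ) (t : Fin (n + 1) → ℝ), StrictMono t → 0 < t 0 → t (Fin.last n) < 1 →
    Measure.map (fun ω i => e ω (t i)) (volume : Measure Ω)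
      = volume.withDensity fun x => ENNReal.ofReal (exFdd t x)

/-- `j`-th smallest value (0-based) among `ω 0, …, ω (m−1)` -/
noncomputable def orderStat {m : ℕ} (ω : Fin m → ℝ) (j : ℕ) : ℝ :=
  ((Multiset.map ω Finset.univ.val).sort (· ≤ ·)).getD j 0

end Paper

namespace Paper
namespace PlaneTree

mutual
theorem len_dfsDeg (t : PlaneTree) : (dfsDeg t).length = (dfsDeg t).sum + 1 := by
  cases t with
  | node ts => simp [dfsDeg, len_dfsDegF ts]; omega
theorem len_dfsDegF (ts : List PlaneTree) :
    (dfsDegF ts).length = (dfsDegF ts).sum + ts.length := by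
  cases ts with
  | nil => simp [dfsDegF]
  | cons t ts => simp [dfsDegF, len_dfsDeg t, len_dfsDegF ts]; omega
end

theorem dfsDegF_eq_nil {ts : List PlaneTree} : dfsDegF ts = [] ↔ ts = [] := by
  cases ts with
  | nil => simp [dfsDegF]
  | cons t ts => cases t with
    | node cs => simp [dfsDegF, dfsDeg]

theorem prefix_append_cases {p a b : List ℕ} (h : p <+: a ++ b) :
    p <+: a ∨ ∃ r, p = a ++ r ∧ r <+: b := by
  rcases List.prefix_or_prefix_of_prefix h (List.prefix_append a b) with h1 | h1
  · exact Or.inl h1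
  · obtain ⟨r, rfl⟩ := h1
    exact Or.inr ⟨r, rfl, (List.prefix_append_right_inj a).1 h⟩

mutual
theorem prefix_dfsDeg (t : PlaneTree) :
    ∀ p, p <+: dfsDeg t → p ≠ dfsDeg t → p.length ≤ p.sum := by
  cases t with
  | node cs =>
    rintro p hp hne
    rw [dfsDeg] at hp hne
    rcases p with _ | ⟨a, q⟩
    · simp
    · rw [List.cons_prefix_cons] at hp
      obtain ⟨rfl, hq⟩ := hp
      have hqne : q ≠ dfsDegF cs := fun h => hne (by rw [h])
      have := prefix_dfsDegF cs q hq hqne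
      simp; omega
theorem prefix_dfsDegF (ts : List PlaneTree) :
    ∀ p, p <+: dfsDegF ts → p ≠ dfsDegF ts → p.length + 1 ≤ p.sum + ts.length := by
  cases ts with
  | nil => intro p hp hne; rw [dfsDegF] at hp hne; simp at hp; exact absurd hp hne
  | cons t ts =>
    intro p hp hne
    rw [dfsDegF] at hp hne
    rcases prefix_append_cases hp with h1 | ⟨r, rfl, hr⟩
    · rcases eq_or_ne p (dfsDeg t) with rfl | hpt
      · have hts : ts ≠ [] := by
          rintro rfl
          exact hne (by simp [dfsDegF])
        have : 1 ≤ ts.length := List.length_pos_iff.2 hts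
        have := len_dfsDeg t
        simp; omega
      · have := prefix_dfsDeg t p h1 hpt
        simp; omega
    · have hrne : r ≠ dfsDegF ts := fun h => hne (by rw [h])
      have h2 := prefix_dfsDegF ts r hr hrne
      have := len_dfsDeg t
      simp; omega
end

mutual
theorem dfsDeg_inj (t u : PlaneTree) (h : dfsDeg t = dfsDeg u) : t = u := by
  cases t with
  | node cs => cases u with
    | node ds =>
      rw [dfsDeg, dfsDeg, List.cons_eq_cons] at h
      rw [dfsDegF_inj cs ds h.2]
theorem dfsDegF_inj (ts us : List PlaneTree) (h : dfsDegF ts = dfsDegF us) : ts = us := by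
  cases ts with
  | nil =>
    rw [dfsDegF] at h
    exact (dfsDegF_eq_nil.1 h.symm).symm
  | cons t ts =>
    cases us with
    | nil =>
      rw [show dfsDegF ([] : List PlaneTree) = [] from rfl] at h
      exact absurd (dfsDegF_eq_nil.1 h) (by simp)
    | cons u us =>
      rw [dfsDegF, dfsDegF] at h
      have key : dfsDeg t = dfsDeg u := by
        have h1 : dfsDeg t <+: dfsDeg u ++ dfsDegF us := ⟨dfsDegF ts, h⟩
        rcases prefix_append_cases h1 with h2 | ⟨r, hr, _⟩
        · rcases eq_or_ne (dfsDeg t) (dfsDeg u) with he | hne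
          · exact he
          · have := prefix_dfsDeg u _ h2 hne
            have := len_dfsDeg t
            omega
        · rcases eq_or_ne (dfsDeg t) (dfsDeg u) with he | hne
          · exact he
          · have h2 : dfsDeg u <+: dfsDeg t := ⟨r, hr.symm⟩
            have hne' : dfsDeg u ≠ dfsDeg t := fun h' => hne h'.symm
            have := prefix_dfsDeg t _ h2 hne'
            have := len_dfsDeg u
            omega
      rw [dfsDeg_inj t u key]
      rw [key] at h
      rw [dfsDegF_inj ts us (List.append_cancel_left h)]
end

theorem numChild_cons (L : List PlaneTree) (j : ℕ) (q : List ℕ) :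
    numChild (node L) (j :: q) = match L[j]? with
      | some t => numChild t q
      | none => 0 := by
  rcases h : L[j]? with _ | t
  · simp [numChild, subtreeAt, h]
  · simp [numChild, subtreeAt, h]

mutual
theorem map_numChild_pos (t : PlaneTree) :
    (pos t).map (numChild t) = dfsDeg t := by
  cases t with
  | node cs =>
    rw [pos, dfsDeg, List.map_cons]
    have h0 : numChild (node cs) [] = cs.length := by simp [numChild, subtreeAt, deg]
    have := map_numChild_posF cs []
    simp only [List.nil_append, List.length_nil] at this
    rw [h0, this]
theorem map_numChild_posF (cs : List PlaneTree) :
    ∀ pre : List PlaneTree,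
      (posF pre.length cs).map (numChild (node (pre ++ cs))) = dfsDegF cs := by
  cases cs with
  | nil => intro pre; rw [posF, dfsDegF]; rfl
  | cons c cs =>
    intro pre
    rw [posF, dfsDegF, List.map_append, List.map_map]
    congr 1
    · have heq : ∀ q, numChild (node (pre ++ c :: cs)) (pre.length :: q) = numChild c q := by
        intro q
        rw [numChild_cons]
        have : (pre ++ c :: cs)[pre.length]? = some c := by
          rw [List.getElem?_eq_getElem (by simp)]
          congr 1
          rw [List.getElem_append_right (Nat.le_refl _)]
          simp
        rw [this]
      calc (pos c).map ((numChild (node (pre ++ c :: cs))) ∘ (fun q => pre.length :: q))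
          = (pos c).map (numChild c) := by
            apply List.map_congr_left; intro q _; exact heq q
        _ = dfsDeg c := map_numChild_pos c
    · have hlen : pre.length + 1 = (pre ++ [c]).length := by simp
      rw [hlen]
      have := map_numChild_posF cs (pre ++ [c])
      simpa using this
end

theorem ecd_eq_count (t : PlaneTree) (i : ℕ) : ecd t i = (dfsDeg t).count i := by
  rw [ecd, ← map_numChild_pos t, List.count_eq_countP, List.countP_map,
    List.countP_eq_length_filter]
  congr 1

theorem ecdF_eq_count (f : List PlaneTree) (i : ℕ) :
    ecdF f i = (dfsDegF f).count i := by
  induction f with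
  | nil => rw [ecdF, dfsDegF]; rfl
  | cons t ts ih => rw [ecdF, dfsDegF]; simp [List.count_append, ecd_eq_count, ← ih, ecdF]

theorem dfsDegF_append (a b : List PlaneTree) :
    dfsDegF (a ++ b) = dfsDegF a ++ dfsDegF b := by
  induction a with
  | nil => rw [show dfsDegF ([] : List PlaneTree) = [] from rfl]; simp
  | cons t ts ih => simp only [List.cons_append, dfsDegF, List.append_assoc]; rw [ih]

theorem count_length_sum (M : ℕ) (L : List ℕ) (h : ∀ x ∈ L, x < M) :
    L.length = ∑ i ∈ Finset.range M, L.count i ∧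
    L.sum = ∑ i ∈ Finset.range M, i * L.count i := by
  induction L with
  | nil => simp
  | cons a L ih =>
    have haM : a ∈ Finset.range M := Finset.mem_range.2 (h a (by simp))
    have ih' := ih (fun x hx => h x (by simp [hx]))
    have hc : ∀ i : ℕ, (a :: L).count i = L.count i + if i = a then 1 else 0 := by
      intro i
      rw [List.count_cons]
      congr 1
      by_cases h' : a = i
      · simp [h']
      · simp [h', Ne.symm h']
    constructor
    · rw [List.length_cons, ih'.1, Finset.sum_congr rfl (fun i _ => hc i),
        Finset.sum_add_distrib, Finset.sum_ite_eq' (Finset.range M) a (fun _ => 1),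
        if_pos haM]
    · have hc2 : ∀ i : ℕ, i * (a :: L).count i
          = i * L.count i + if i = a then i else 0 := by
        intro i; rw [hc i, Nat.mul_add]
        congr 1
        split <;> simp_all
      rw [List.sum_cons, ih'.2, Finset.sum_congr rfl (fun i _ => hc2 i),
        Finset.sum_add_distrib, Finset.sum_ite_eq' (Finset.range M) a (fun i => i),
        if_pos haM]
      omega

section Facts

variable {s : ℕ → ℕ} {M m z : ℕ}

theorem entries_lt (hsupp : ∀ j, M ≤ j → s j = 0) {f : List PlaneTree}
    (hf : f ∈ forestSet s) : ∀ x ∈ dfsDegF f, x < M := by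
  intro x hx
  by_contra hge
  have h1 : 0 < (dfsDegF f).count x := List.count_pos_iff.2 hx
  rw [← ecdF_eq_count, hf x, hsupp x (le_of_not_gt hge)] at h1
  exact absurd h1 (lt_irrefl 0)

theorem len_eq (hsupp : ∀ j, M ≤ j → s j = 0)
    (hm : m = ∑ j ∈ Finset.range M, s j) {f : List PlaneTree}
    (hf : f ∈ forestSet s) : (dfsDegF f).length = m := by
  rw [(count_length_sum M _ (entries_lt hsupp hf)).1, hm]
  exact Finset.sum_congr rfl fun j _ => by rw [← ecdF_eq_count, hf j]

theorem sum_eq (hsupp : ∀ j, M ≤ j → s j = 0)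
    (hz : m = z + ∑ j ∈ Finset.range M, j * s j) {f : List PlaneTree}
    (hf : f ∈ forestSet s) : (dfsDegF f).sum + z = m := by
  rw [(count_length_sum M _ (entries_lt hsupp hf)).2]
  rw [hz]
  have : ∀ j ∈ Finset.range M, j * (dfsDegF f).count j = j * s j := by
    intro j _; rw [← ecdF_eq_count, hf j]
  rw [Finset.sum_congr rfl this]
  omega

theorem flen_eq (hsupp : ∀ j, M ≤ j → s j = 0)
    (hm : m = ∑ j ∈ Finset.range M, s j)
    (hz : m = z + ∑ j ∈ Finset.range M, j * s j) {f : List PlaneTree}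
    (hf : f ∈ forestSet s) : f.length = z := by
  have h1 := len_dfsDegF f
  have h2 := len_eq hsupp hm hf
  have h3 := sum_eq hsupp hz hf
  omega

theorem forestSet_finite (hsupp : ∀ j, M ≤ j → s j = 0)
    (hm : m = ∑ j ∈ Finset.range M, s j) : (forestSet s).Finite := by
  classical
  set e : List PlaneTree → List (Fin (M + 1)) :=
    fun f => (dfsDegF f).map (fun x => (⟨min x M, by omega⟩ : Fin (M + 1))) with he
  have hrec : ∀ f ∈ forestSet s, (e f).map Fin.val = dfsDegF f := by
    intro f hf
    rw [he]
    simp only [List.map_map]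
    have : ∀ x ∈ dfsDegF f, (Fin.val ∘ fun x => (⟨min x M, by omega⟩ : Fin (M + 1))) x
        = id x := by
      intro x hx
      have := entries_lt hsupp hf x hx
      simp [Function.comp]
      omega
    rw [List.map_congr_left this, List.map_id]
  apply Set.Finite.of_finite_image (f := e)
  · apply Set.Finite.subset (List.finite_length_eq (Fin (M + 1)) m)
    rintro l ⟨f, hf, rfl⟩
    have h1 : (e f).length = m := by
      have := congrArg List.length (hrec f hf)
      rw [List.length_map] at this
      rw [this]
      exact len_eq hsupp hm hf
    exact h1
  · intro f hf g hg hfg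
    have : dfsDegF f = dfsDegF g := by
      rw [← hrec f hf, ← hrec g hg, hfg]
    exact dfsDegF_inj f g this

theorem forest_ne_nil (hsupp : ∀ j, M ≤ j → s j = 0)
    (hm : m = ∑ j ∈ Finset.range M, s j) (hm1 : 1 ≤ m) {f : List PlaneTree}
    (hf : f ∈ forestSet s) : f ≠ [] := by
  rintro rfl
  have := len_eq hsupp hm hf
  rw [show dfsDegF ([] : List PlaneTree) = [] from rfl] at this
  simp at this
  omega

theorem rootDeg_mem {f : List PlaneTree} (hne : f ≠ []) :
    rootDeg f 0 ∈ dfsDegF f := by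
  cases f with
  | nil => exact absurd rfl hne
  | cons t rest =>
    cases t with
    | node cs =>
      rw [dfsDegF, dfsDeg]
      simp [rootDeg, deg]

end Facts

end PlaneTree
end Paper

namespace Paper
namespace PlaneTree

theorem count_cons' (a b : ℕ) (L : List ℕ) :
    (a :: L).count b = L.count b + if a = b then 1 else 0 := by
  rw [List.count_cons]
  congr 1
  by_cases h : a = b
  · simp [h]
  · simp [h, Ne.symm h]

theorem update_sums (s : ℕ → ℕ) (M m z i : ℕ)
    (hsupp : ∀ j, M ≤ j → s j = 0)
    (hm : m = ∑ j ∈ Finset.range M, s j)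
    (hz : m = z + ∑ j ∈ Finset.range M, j * s j)
    (hz1 : 1 ≤ z) (hsi : 1 ≤ s i) :
    (∀ j, M ≤ j → Function.update s i (s i - 1) j = 0) ∧
    m - 1 = ∑ j ∈ Finset.range M, Function.update s i (s i - 1) j ∧
    m - 1 = (z - 1 + i) + ∑ j ∈ Finset.range M, j * Function.update s i (s i - 1) j := by
  classical
  have hiM : i < M := by
    by_contra h
    rw [hsupp i (le_of_not_gt h)] at hsi; omega
  have hiMr : i ∈ Finset.range M := Finset.mem_range.2 hiM
  set s' := Function.update s i (s i - 1) with hs'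
  have hs'j : ∀ j, j ≠ i → s' j = s j := fun j hj => Function.update_of_ne hj _ _
  have hs'i : s' i = s i - 1 := Function.update_self _ _ _
  have hsupp' : ∀ j, M ≤ j → s' j = 0 := by
    intro j hj
    rw [hs'j j (by omega), hsupp j hj]
  have hsum' : ∑ j ∈ Finset.range M, s' j + 1 = ∑ j ∈ Finset.range M, s j := by
    rw [← Finset.add_sum_erase _ s hiMr, ← Finset.add_sum_erase _ s' hiMr, hs'i]
    have : ∑ j ∈ (Finset.range M).erase i, s' j
        = ∑ j ∈ (Finset.range M).erase i, s j :=
      Finset.sum_congr rfl fun j hj => hs'j j (Finset.ne_of_mem_erase hj)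
    rw [this]
    omega
  have hmul : i * (s i - 1) + i = i * s i := by
    obtain ⟨k, hk⟩ : ∃ k, s i = k + 1 := ⟨s i - 1, by omega⟩
    rw [hk]
    simp [Nat.mul_add]
  have hwsum' : ∑ j ∈ Finset.range M, j * s' j + i = ∑ j ∈ Finset.range M, j * s j := by
    rw [← Finset.add_sum_erase _ (fun j => j * s j) hiMr,
      ← Finset.add_sum_erase _ (fun j => j * s' j) hiMr]
    have : ∑ j ∈ (Finset.range M).erase i, j * s' j
        = ∑ j ∈ (Finset.range M).erase i, j * s j :=
      Finset.sum_congr rfl fun j hj => by rw [hs'j j (Finset.ne_of_mem_erase hj)]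
    rw [this]
    simp only [hs'i]
    omega
  exact ⟨hsupp', by omega, by omega⟩

theorem prod_update (s : ℕ → ℕ) (M i : ℕ) (hiM : i ∈ Finset.range M) (hsi : 1 ≤ s i) :
    s i * ∏ j ∈ Finset.range M, (Function.update s i (s i - 1) j).factorial
      = ∏ j ∈ Finset.range M, (s j).factorial := by
  classical
  rw [← Finset.mul_prod_erase _ (fun j => (s j).factorial) hiM,
    ← Finset.mul_prod_erase _ (fun j => (Function.update s i (s i - 1) j).factorial) hiM]
  have he : ∏ j ∈ (Finset.range M).erase i, (Function.update s i (s i - 1) j).factorial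
      = ∏ j ∈ (Finset.range M).erase i, (s j).factorial :=
    Finset.prod_congr rfl fun j hj => by
      rw [Function.update_of_ne (Finset.ne_of_mem_erase hj)]
  rw [he, Function.update_self, ← Nat.mul_assoc, Nat.mul_factorial_pred (by omega)]

theorem ncard_fiber (s : ℕ → ℕ) (M m z i : ℕ)
    (hsupp : ∀ j, M ≤ j → s j = 0)
    (hm : m = ∑ j ∈ Finset.range M, s j)
    (hz : m = z + ∑ j ∈ Finset.range M, j * s j)
    (hz1 : 1 ≤ z) (hm1 : 1 ≤ m) (hsi : 1 ≤ s i) :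
    {f ∈ forestSet s | rootDeg f 0 = i}.ncard
      = (forestSet (Function.update s i (s i - 1))).ncard := by
  classical
  obtain ⟨hsupp', hm', hz'⟩ := update_sums s M m z i hsupp hm hz hz1 hsi
  set s' := Function.update s i (s i - 1) with hs'def
  have hs'j : ∀ j, j ≠ i → s' j = s j := fun j hj => Function.update_of_ne hj _ _
  have hs'i : s' i = s i - 1 := Function.update_self _ _ _
  set Ψ : List PlaneTree → List PlaneTree := fun g => node (g.take i) :: g.drop i with hΨ
  have hmaps : ∀ g ∈ forestSet s', Ψ g ∈ {f ∈ forestSet s | rootDeg f 0 = i} := by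
    intro g hg
    have hglen : g.length = z - 1 + i := flen_eq hsupp' hm' hz' hg
    have htl : (g.take i).length = i := by
      rw [List.length_take]; omega
    have hdd : dfsDegF (Ψ g) = i :: dfsDegF g := by
      show dfsDegF (node (g.take i) :: g.drop i) = i :: dfsDegF g
      rw [dfsDegF, dfsDeg, htl, List.cons_append, ← dfsDegF_append, List.take_append_drop]
    constructor
    · intro j
      rw [ecdF_eq_count, hdd, count_cons']
      have hgj := hg j
      rw [ecdF_eq_count] at hgj
      rw [hgj]
      by_cases hji : j = i
      · subst hji
        rw [if_pos rfl, hs'i]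
        omega
      · rw [if_neg (Ne.symm hji), hs'j j hji, Nat.add_zero]
    · show rootDeg (Ψ g) 0 = i
      simp only [hΨ, rootDeg, List.getD_cons_zero, deg]
      exact htl
  have hinj : Set.InjOn Ψ (forestSet s') := by
    intro g _ g' _ h
    simp only [hΨ, List.cons.injEq, node.injEq] at h
    rw [← List.take_append_drop i g, ← List.take_append_drop i g', h.1, h.2]
  have hsurj : Set.SurjOn Ψ (forestSet s') {f ∈ forestSet s | rootDeg f 0 = i} := by
    rintro f ⟨hf, hroot⟩
    have hne := forest_ne_nil hsupp hm hm1 hf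
    cases f with
    | nil => exact absurd rfl hne
    | cons t rest =>
      cases t with
      | node cs =>
        have hcs : cs.length = i := by
          simpa only [rootDeg, List.getD_cons_zero, deg] using hroot
        have hdd : dfsDegF (node cs :: rest) = i :: dfsDegF (cs ++ rest) := by
          rw [dfsDegF, dfsDeg, dfsDegF_append, hcs, List.cons_append]
        refine ⟨cs ++ rest, ?_, ?_⟩
        · intro j
          have hfj := hf j
          rw [ecdF_eq_count, hdd, count_cons'] at hfj
          rw [ecdF_eq_count]
          by_cases hji : j = i
          · subst hji
            rw [if_pos rfl] at hfj
            rw [hs'i]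
            omega
          · rw [if_neg (Ne.symm hji)] at hfj
            rw [hs'j j hji]
            omega
        · show node ((cs ++ rest).take i) :: (cs ++ rest).drop i = node cs :: rest
          rw [← hcs, List.take_left, List.drop_left]
  have hbij : Set.BijOn Ψ (forestSet s') {f ∈ forestSet s | rootDeg f 0 = i} :=
    ⟨hmaps, hinj, hsurj⟩
  rw [← hbij.image_eq, Set.ncard_image_of_injOn hbij.injOn]

theorem forest_count : ∀ m : ℕ, ∀ (s : ℕ → ℕ) (M z : ℕ),
    (∀ j, M ≤ j → s j = 0) → m = ∑ j ∈ Finset.range M, s j →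
    m = z + ∑ j ∈ Finset.range M, j * s j → 1 ≤ m →
    (forestSet s).ncard * ∏ j ∈ Finset.range M, (s j).factorial
      = z * (m - 1).factorial := by
  intro m
  induction m using Nat.strong_induction_on with
  | _ m IH =>
  intro s M z hsupp hm hz hm1
  classical
  rcases Nat.eq_zero_or_pos z with rfl | hz1
  · have hemp : forestSet s = ∅ := by
      ext f
      simp only [Set.mem_empty_iff_false, iff_false]
      intro hf
      have hfl := flen_eq hsupp hm hz hf
      have hne := forest_ne_nil hsupp hm hm1 hf
      rw [List.length_eq_zero_iff] at hfl
      exact hne hfl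
    simp [hemp]
  rcases eq_or_lt_of_le hm1 with hm1' | hm2
  · -- base case m = 1
    have hme : m = 1 := hm1'.symm
    subst hme
    have hwz0 : ∑ j ∈ Finset.range M, j * s j = 0 := by omega
    have hzz : z = 1 := by omega
    have hj0 : ∀ j, j ≠ 0 → s j = 0 := by
      intro j hj
      rcases lt_or_ge j M with hjM | hjM
      · have h0 := (Finset.sum_eq_zero_iff).1 hwz0 j (Finset.mem_range.2 hjM)
        rcases Nat.mul_eq_zero.1 h0 with h | h
        · omega
        · exact h
      · exact hsupp j hjM
    have hM : 0 < M := by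
      by_contra h
      have hM0 : M = 0 := by omega
      rw [hM0] at hm
      simp at hm
    have hs0 : s 0 = 1 := by
      have hsum0 : ∑ j ∈ Finset.range M, s j = s 0 := by
        rw [show ∑ j ∈ Finset.range M, s j
            = ∑ j ∈ Finset.range M, if j = 0 then s 0 else 0 from
          Finset.sum_congr rfl fun j _ => by
            by_cases hj : j = 0
            · simp [hj]
            · simp [hj, hj0 j hj]]
        rw [Finset.sum_ite_eq' (Finset.range M) 0 (fun _ => s 0),
          if_pos (Finset.mem_range.2 hM)]
      omega
    have hdd1 : dfsDegF [node []] = [0] := by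
      rw [dfsDegF, dfsDeg]
      simp [show dfsDegF ([] : List PlaneTree) = [] from rfl]
    have hset : forestSet s = {[node []]} := by
      ext f
      simp only [Set.mem_singleton_iff]
      constructor
      · intro hf
        have hfl := flen_eq hsupp hm hz hf
        rw [hzz] at hfl
        obtain ⟨t, rfl⟩ := List.length_eq_one_iff.1 hfl
        cases t with
        | node cs =>
          have hlen := len_eq hsupp hm hf
          rw [dfsDegF, dfsDeg] at hlen
          rw [show dfsDegF ([] : List PlaneTree) = [] from rfl] at hlen
          simp only [List.append_nil, List.length_cons] at hlen
          have hnil : dfsDegF cs = [] := List.length_eq_zero_iff.1 (by omega)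
          rw [dfsDegF_eq_nil.1 hnil]
      · rintro rfl
        intro j
        rw [ecdF_eq_count, hdd1]
        by_cases hj : j = 0
        · subst hj
          simp [hs0]
        · rw [hj0 j hj]
          simp [hj, Ne.symm hj]
    have hprod : ∏ j ∈ Finset.range M, (s j).factorial = 1 :=
      Finset.prod_eq_one fun j _ => by
        by_cases h : j = 0
        · subst h; rw [hs0]; rfl
        · rw [hj0 j h]; rfl
    rw [hset, hprod, Set.ncard_singleton, hzz]
    rfl
  · -- inductive step m ≥ 2
    have hfin := forestSet_finite hsupp hm
    have hN : (forestSet s).ncard = hfin.toFinset.card :=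
      Set.ncard_eq_toFinset_card _ hfin
    have hfib : hfin.toFinset.card = ∑ i ∈ Finset.range M,
        (hfin.toFinset.filter fun f => rootDeg f 0 = i).card := by
      apply Finset.card_eq_sum_card_fiberwise
      intro f hf
      rw [Finset.mem_coe, Set.Finite.mem_toFinset] at hf
      exact Finset.mem_range.2
        (entries_lt hsupp hf _ (rootDeg_mem (forest_ne_nil hsupp hm (by omega) hf)))
    have hfib2 : ∀ i : ℕ, (hfin.toFinset.filter fun f => rootDeg f 0 = i).card
        = {f ∈ forestSet s | rootDeg f 0 = i}.ncard := by
      intro i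
      rw [← Set.ncard_coe_finset]
      congr 1
      ext f
      simp [Set.Finite.mem_toFinset]
    have hterm : ∀ i ∈ Finset.range M,
        {f ∈ forestSet s | rootDeg f 0 = i}.ncard
            * ∏ j ∈ Finset.range M, (s j).factorial
          = (z - 1 + i) * s i * (m - 2).factorial := by
      intro i _
      by_cases hsi : 1 ≤ s i
      · obtain ⟨hsupp', hm', hz'⟩ := update_sums s M m z i hsupp hm hz hz1 hsi
        have hiM : i < M := by
          by_contra h
          rw [hsupp i (le_of_not_gt h)] at hsi; omega
        rw [ncard_fiber s M m z i hsupp hm hz hz1 (by omega) hsi]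
        have hIH := IH (m - 1) (by omega) (Function.update s i (s i - 1)) M
          (z - 1 + i) hsupp' hm' hz' (by omega)
        rw [show m - 1 - 1 = m - 2 from by omega] at hIH
        calc (forestSet (Function.update s i (s i - 1))).ncard
              * ∏ j ∈ Finset.range M, (s j).factorial
            = (forestSet (Function.update s i (s i - 1))).ncard
              * (s i * ∏ j ∈ Finset.range M,
                  (Function.update s i (s i - 1) j).factorial) := by
              rw [prod_update s M i (Finset.mem_range.2 hiM) hsi]
          _ = s i * ((forestSet (Function.update s i (s i - 1))).ncard
              * ∏ j ∈ Finset.range M,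
                  (Function.update s i (s i - 1) j).factorial) := by ring
          _ = s i * ((z - 1 + i) * (m - 2).factorial) := by rw [hIH]
          _ = (z - 1 + i) * s i * (m - 2).factorial := by ring
      · have hs0 : s i = 0 := by omega
        have hempty : {f ∈ forestSet s | rootDeg f 0 = i} = ∅ := by
          ext f
          simp only [Set.mem_setOf_eq, Set.mem_empty_iff_false, iff_false, not_and]
          intro hf hroot
          have hmem := rootDeg_mem (forest_ne_nil hsupp hm (by omega) hf)
          rw [hroot] at hmem
          have hpos : 0 < (dfsDegF f).count i := List.count_pos_iff.2 hmem
          rw [← ecdF_eq_count, hf i, hs0] at hpos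
          exact absurd hpos (lt_irrefl 0)
        simp [hempty, hs0]
    have hzm : z ≤ m := by omega
    have hsum : ∑ i ∈ Finset.range M, (z - 1 + i) * s i = z * (m - 1) := by
      have h1 : ∑ i ∈ Finset.range M, (z - 1 + i) * s i
          = (z - 1) * ∑ i ∈ Finset.range M, s i
            + ∑ i ∈ Finset.range M, i * s i := by
        rw [Finset.mul_sum, ← Finset.sum_add_distrib]
        exact Finset.sum_congr rfl fun i _ => by ring
      rw [h1, ← hm, show ∑ i ∈ Finset.range M, i * s i = m - z from by omega]
      zify [hz1, hzm, hm1]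
      ring
    have hfac : (m - 1) * (m - 2).factorial = (m - 1).factorial := by
      rw [show m - 2 = m - 1 - 1 from by omega]
      exact Nat.mul_factorial_pred (by omega)
    have hstep : ∑ i ∈ Finset.range M,
        (hfin.toFinset.filter fun f => rootDeg f 0 = i).card
          * ∏ j ∈ Finset.range M, (s j).factorial
        = ∑ i ∈ Finset.range M, (z - 1 + i) * s i * (m - 2).factorial :=
      Finset.sum_congr rfl fun i hi => by rw [hfib2 i]; exact hterm i hi
    rw [hN, hfib, Finset.sum_mul, hstep, ← Finset.sum_mul, hsum, mul_assoc, hfac]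

end PlaneTree
end Paper

open Paper Paper.PlaneTree in
/-- law of the children count of the first root of a uniform forest. -/
theorem forest_first_root_law (s : ℕ → ℕ) (M z m : ℕ)
    (hsupp : ∀ i, M ≤ i → s i = 0)
    (hm : m = ∑ i ∈ Finset.range M, s i)
    (hz : m = z + ∑ i ∈ Finset.range M, i * s i)
    (hz1 : 1 ≤ z) (hm2 : 2 ≤ m)
    (i : ℕ) (hsi : 1 ≤ s i) :
    {f ∈ forestSet s | rootDeg f 0 = i}.ncard * (z * (m - 1))
      = (z - 1 + i) * s i * (forestSet s).ncard := by

  classical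
  have hm1 : 1 ≤ m := by omega
  have hiM : i < M := by
    by_contra h
    rw [hsupp i (le_of_not_gt h)] at hsi; omega
  obtain ⟨hsupp', hm', hz'⟩ := update_sums s M m z i hsupp hm hz hz1 hsi
  have hkey := forest_count m s M z hsupp hm hz hm1
  have hkey' := forest_count (m - 1) (Function.update s i (s i - 1)) M (z - 1 + i)
    hsupp' hm' hz' (by omega)
  rw [show m - 1 - 1 = m - 2 from by omega] at hkey'
  have hfiber := ncard_fiber s M m z i hsupp hm hz hz1 hm1 hsi
  have hprod := prod_update s M i (Finset.mem_range.2 hiM) hsi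
  have hfac : (m - 1) * (m - 2).factorial = (m - 1).factorial := by
    rw [show m - 2 = m - 1 - 1 from by omega]
    exact Nat.mul_factorial_pred (by omega)
  have hPpos : 0 < ∏ j ∈ Finset.range M, (s j).factorial :=
    Finset.prod_pos fun _ _ => Nat.factorial_pos _
  apply Nat.eq_of_mul_eq_mul_right hPpos
  rw [hfiber]
  calc (forestSet (Function.update s i (s i - 1))).ncard * (z * (m - 1))
        * ∏ j ∈ Finset.range M, (s j).factorial
      = z * (m - 1) * (s i * ((forestSet (Function.update s i (s i - 1))).ncard
          * ∏ j ∈ Finset.range M, (Function.update s i (s i - 1) j).factorial)) := by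
        rw [← hprod]; ring
    _ = z * (m - 1) * (s i * ((z - 1 + i) * (m - 2).factorial)) := by rw [hkey']
    _ = (z - 1 + i) * s i * (z * ((m - 1) * (m - 2).factorial)) := by ring
    _ = (z - 1 + i) * s i * (z * (m - 1).factorial) := by rw [hfac]
    _ = (z - 1 + i) * s i * ((forestSet s).ncard
          * ∏ j ∈ Finset.range M, (s j).factorial) := by rw [← hkey]
    _ = (z - 1 + i) * s i * (forestSet s).ncard
          * ∏ j ∈ Finset.range M, (s j).factorial := by ring
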